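/- Let μ ∈ P(ℝ^m) have a Lebesgue density ρ, let u ∈ ℝ^m, and suppose for some R > 0 that ρ restricted to B(u,R) is symmetric about u and has convex superlevel sets. Then the constant approximating sequence at u is optimal: for every null sequence (r_n) and every sequence u_n → u, liminf_{n→∞} μ(B(u,r_n))/μ(B(u_n,r_n)) ≥ 1. -/

import Mathlib

open MeasureTheory Metric Filter Topology
open Set Pointwise
open scoped ENNReal NNReal


lemma bm_compact (K L : Set ℝ) (hK : IsCompact K) (hL : IsCompact L)
    (hKne : K.Nonempty) (hLne : L.Nonempty) :
    volume K + volume L ≤ volume (K + L) := by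
  have hsK : sSup K ∈ K := hK.sSup_mem hKne
  have hsL : sInf L ∈ L := hL.sInf_mem hLne
  set X : Set ℝ := sSup K +ᵥ L with hX
  set Y : Set ℝ := sInf L +ᵥ K with hY
  have hXsub : X ⊆ K + L := by
    rintro x ⟨l, hl, rfl⟩
    exact Set.add_mem_add hsK hl
  have hYsub : Y ⊆ K + L := by
    rintro x ⟨k, hk, rfl⟩
    exact Set.mem_add.2 ⟨k, hk, sInf L, hsL, by simp [vadd_eq_add, add_comm]⟩
  have hXY : X ∩ Y ⊆ {sSup K + sInf L} := by
    rintro x ⟨⟨l, hl, hlx⟩, ⟨k, hk, hkx⟩⟩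
    simp only [vadd_eq_add] at hlx hkx ⊢
    have h2 : 0 ≤ l - sInf L := sub_nonneg.2 (csInf_le hL.bddBelow hl)
    have h3 : k - sSup K ≤ 0 := sub_nonpos.2 (le_csSup hK.bddAbove hk)
    have : l = sInf L := by
      have : l - sInf L = k - sSup K := by rw [← hlx] at hkx; linarith
      linarith
    simp only [Set.mem_singleton_iff, ← hlx, this]
  have hXm : MeasurableSet X := hL.measurableSet.const_vadd (sSup K)
  have hYm : MeasurableSet Y := hK.measurableSet.const_vadd (sInf L)
  have key : volume X + volume Y = volume (X ∪ Y) + volume (X ∩ Y) :=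
    (measure_union_add_inter' hXm Y).symm
  have h0 : volume (X ∩ Y) = 0 :=
    le_antisymm (le_trans (measure_mono hXY) (by simp)) zero_le
  have hvX : volume X = volume L := by rw [hX]; exact measure_vadd _ _ _
  have hvY : volume Y = volume K := by rw [hY]; exact measure_vadd _ _ _
  calc volume K + volume L = volume X + volume Y := by rw [hvX, hvY, add_comm]
    _ = volume (X ∪ Y) := by rw [key, h0, add_zero]
    _ ≤ volume (K + L) := measure_mono (union_subset hXsub hYsub)

lemma vol_le_add_left (A B : Set ℝ) (hAne : A.Nonempty) : volume B ≤ volume (A + B) := by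
  obtain ⟨a, ha⟩ := hAne
  calc volume B = volume (a +ᵥ B) := (measure_vadd _ _ _).symm
    _ ≤ volume (A + B) := measure_mono (by rintro x ⟨b, hb, rfl⟩; exact Set.add_mem_add ha hb)

lemma vol_le_add_right (A B : Set ℝ) (hBne : B.Nonempty) : volume A ≤ volume (A + B) := by
  rw [add_comm A B]; exact vol_le_add_left B A hBne

lemma bm_one_dim (A B : Set ℝ) (hA : MeasurableSet A) (hB : MeasurableSet B)
    (hAne : A.Nonempty) (hBne : B.Nonempty) :
    volume A + volume B ≤ volume (A + B) := by
  rw [hA.measure_eq_iSup_isCompact, hB.measure_eq_iSup_isCompact]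
  simp only [iSup_and', ← iSup_and]
  refine ENNReal.biSup_add_biSup_le' (p := fun K => K ⊆ A ∧ IsCompact K)
    (q := fun L => L ⊆ B ∧ IsCompact L) ⟨∅, empty_subset _, isCompact_empty⟩
    ⟨∅, empty_subset _, isCompact_empty⟩ ?_
  rintro K ⟨hKA, hKc⟩ L ⟨hLB, hLc⟩
  rcases K.eq_empty_or_nonempty with rfl | hKne
  · simpa using vol_le_add_left A B hAne |>.trans' (measure_mono hLB |>.trans_eq rfl) |>.trans le_rfl
  rcases L.eq_empty_or_nonempty with rfl | hLne
  · simpa using (measure_mono hKA).trans (vol_le_add_right A B hBne)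
  exact (bm_compact K L hKc hLc hKne hLne).trans
    (measure_mono (Set.add_subset_add hKA hLB))

lemma ennreal_am_gm {l : ℝ} (hl0 : 0 < l) (hl1 : l < 1) (a b : ℝ≥0∞) :
    a ^ (1 - l) * b ^ l ≤ ENNReal.ofReal (1 - l) * a + ENNReal.ofReal l * b := by
  have h1l : (0:ℝ) < 1 - l := by linarith
  rcases eq_or_ne a ⊤ with rfl | ha
  · rcases eq_or_ne b 0 with rfl | hb
    · simp [ENNReal.zero_rpow_of_pos hl0]
    · rw [ENNReal.top_rpow_of_pos h1l, ENNReal.mul_top (ENNReal.ofReal_pos.2 h1l).ne']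
      exact le_top.trans le_self_add
  rcases eq_or_ne b ⊤ with rfl | hb
  · rcases eq_or_ne a 0 with rfl | ha0
    · simp [ENNReal.zero_rpow_of_pos h1l]
    · rw [ENNReal.top_rpow_of_pos hl0, ENNReal.mul_top (ENNReal.ofReal_pos.2 hl0).ne']
      exact le_top.trans le_add_self
  have ha' : a = ENNReal.ofReal a.toReal := (ENNReal.ofReal_toReal ha).symm
  have hb' : b = ENNReal.ofReal b.toReal := (ENNReal.ofReal_toReal hb).symm
  have hA0 : 0 ≤ a.toReal := ENNReal.toReal_nonneg
  have hB0 : 0 ≤ b.toReal := ENNReal.toReal_nonneg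
  calc a ^ (1-l) * b ^ l
      = ENNReal.ofReal (a.toReal ^ (1-l) * b.toReal ^ l) := by
        rw [ENNReal.ofReal_mul (Real.rpow_nonneg hA0 _), ha', hb',
          ENNReal.ofReal_rpow_of_nonneg hA0 h1l.le, ENNReal.ofReal_rpow_of_nonneg hB0 hl0.le,
          ENNReal.toReal_ofReal hA0, ENNReal.toReal_ofReal hB0]
    _ ≤ ENNReal.ofReal ((1-l) * a.toReal + l * b.toReal) :=
        ENNReal.ofReal_le_ofReal
          (Real.geom_mean_le_arith_mean2_weighted h1l.le hl0.le hA0 hB0 (by ring))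
    _ = _ := by
        rw [ENNReal.ofReal_add (by positivity) (by positivity),
          ENNReal.ofReal_mul h1l.le, ENNReal.ofReal_mul hl0.le, ← ha', ← hb']

lemma layercake_lt (f : ℝ → ℝ≥0∞) (hf : Measurable f) (hf1 : ∀ x, f x ≤ 1) :
    ∫⁻ x, f x = ∫⁻ t in Ioo (0:ℝ) 1, volume {a | ENNReal.ofReal t < f a} := by
  have hne : ∀ x, f x ≠ ⊤ := fun x => ((hf1 x).trans_lt (by simp)).ne
  have key := lintegral_eq_lintegral_meas_lt (volume : Measure ℝ)
    (f := fun x => (f x).toReal) (Eventually.of_forall fun x => ENNReal.toReal_nonneg)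
    (hf.ennreal_toReal.aemeasurable)
  have lhs : ∫⁻ x, ENNReal.ofReal ((f x).toReal) = ∫⁻ x, f x := by
    congr 1; ext x; exact ENNReal.ofReal_toReal (hne x)
  rw [lhs] at key
  rw [key]
  have hsplit : Ioi (0:ℝ) = Ioo 0 1 ∪ Ici 1 := by
    ext t; simp only [mem_Ioi, mem_union, mem_Ioo, mem_Ici]
    constructor
    · intro ht; rcases lt_or_ge t 1 with h | h
      · exact Or.inl ⟨ht, h⟩
      · exact Or.inr h
    · rintro (⟨h, _⟩ | h) <;> linarith
  rw [hsplit, lintegral_union measurableSet_Ici (by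
    simp only [Set.disjoint_left, mem_Ioo, mem_Ici]
    rintro t ⟨_, h1⟩ h2; linarith)]
  have h2 : ∫⁻ t in Ici (1:ℝ), volume {a | t < (f a).toReal} = 0 := by
    rw [← lintegral_zero (μ := volume.restrict (Ici (1:ℝ)))]
    apply setLIntegral_congr_fun measurableSet_Ici
    intro t ht
    have : {a | t < (f a).toReal} = ∅ := by
      ext a; simp only [mem_setOf_eq, mem_empty_iff_false, iff_false, not_lt]
      calc (f a).toReal ≤ (1:ℝ≥0∞).toReal :=
            ENNReal.toReal_mono (by simp) (hf1 a)
        _ = 1 := by simp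
        _ ≤ t := ht
    simp [this]
  rw [h2, add_zero]
  apply setLIntegral_congr_fun measurableSet_Ioo
  intro t ht; dsimp only
  congr 1
  ext a
  simp only [mem_setOf_eq]
  exact (ENNReal.ofReal_lt_iff_lt_toReal ht.1.le (hne a)).symm

lemma layercake_le_ge (h : ℝ → ℝ≥0∞) (hh : Measurable h) (hh1 : ∀ x, h x ≤ 1) :
    ∫⁻ t in Ioo (0:ℝ) 1, volume {a | ENNReal.ofReal t ≤ h a} ≤ ∫⁻ x, h x := by
  have hne : ∀ x, h x ≠ ⊤ := fun x => ((hh1 x).trans_lt (by simp)).ne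
  have key := lintegral_eq_lintegral_meas_le (volume : Measure ℝ)
    (f := fun x => (h x).toReal) (Eventually.of_forall fun x => ENNReal.toReal_nonneg)
    (hh.ennreal_toReal.aemeasurable)
  have lhs : ∫⁻ x, ENNReal.ofReal ((h x).toReal) = ∫⁻ x, h x := by
    congr 1; ext x; exact ENNReal.ofReal_toReal (hne x)
  rw [lhs] at key
  rw [key]
  have : ∫⁻ t in Ioo (0:ℝ) 1, volume {a | ENNReal.ofReal t ≤ h a}
      = ∫⁻ t in Ioo (0:ℝ) 1, volume {a | t ≤ (h a).toReal} := by
    apply setLIntegral_congr_fun measurableSet_Ioo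
    intro t ht; dsimp only
    congr 1; ext a
    simp only [mem_setOf_eq]
    exact ENNReal.ofReal_le_iff_le_toReal (hne a)
  rw [this]
  exact lintegral_mono_set Ioo_subset_Ioi_self

lemma vol_real_smul (c : ℝ) (s : Set ℝ) :
    volume (c • s) = ENNReal.ofReal |c| * volume s := by
  rw [MeasureTheory.Measure.addHaar_smul]
  congr 2
  simp [abs_pow]

lemma pl_one_core {l : ℝ} (hl0 : 0 < l) (hl1 : l < 1) (f g h : ℝ → ℝ≥0∞)
    (hf : Measurable f) (hg : Measurable g) (hh : Measurable h)
    (hf1 : ∀ x, f x ≤ 1) (hg1 : ∀ x, g x ≤ 1) (hh1 : ∀ x, h x ≤ 1)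
    (hfs : 1 ≤ ⨆ x, f x) (hgs : 1 ≤ ⨆ x, g x)
    (hyp : ∀ x y, f x ^ (1 - l) * g y ^ l ≤ h ((1 - l) * x + l * y)) :
    ENNReal.ofReal (1 - l) * (∫⁻ x, f x) + ENNReal.ofReal l * (∫⁻ x, g x) ≤ ∫⁻ x, h x := by
  have h1l : (0:ℝ) < 1 - l := by linarith
  rw [layercake_lt f hf hf1, layercake_lt g hg hg1]
  refine le_trans ?_ (layercake_le_ge h hh hh1)
  rw [← lintegral_const_mul' _ _ (by simp), ← lintegral_const_mul' _ _ (by simp)]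
  refine le_trans (le_lintegral_add _ _) (lintegral_mono_ae ?_)
  filter_upwards [ae_restrict_mem measurableSet_Ioo] with t ht
  -- key pointwise inequality
  set A := {a | ENNReal.ofReal t < f a} with hA
  set B := {a | ENNReal.ofReal t < g a} with hB
  have htlt : ENNReal.ofReal t < 1 := ENNReal.ofReal_lt_one.2 ht.2
  have hAne : A.Nonempty := by
    have : ENNReal.ofReal t < ⨆ x, f x := lt_of_lt_of_le htlt hfs
    obtain ⟨x, hx⟩ := lt_iSup_iff.1 this
    exact ⟨x, hx⟩
  have hBne : B.Nonempty := by
    have : ENNReal.ofReal t < ⨆ x, g x := lt_of_lt_of_le htlt hgs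
    obtain ⟨x, hx⟩ := lt_iSup_iff.1 this
    exact ⟨x, hx⟩
  have hAm : MeasurableSet A := hf measurableSet_Ioi
  have hBm : MeasurableSet B := hg measurableSet_Ioi
  have hsub : (1 - l) • A + l • B ⊆ {a | ENNReal.ofReal t ≤ h a} := by
    rintro z ⟨x', ⟨x, hx, rfl⟩, y', ⟨y, hy, rfl⟩, rfl⟩
    simp only [mem_setOf_eq, smul_eq_mul]
    calc ENNReal.ofReal t = ENNReal.ofReal t ^ ((1 - l) + l) := by
          rw [sub_add_cancel, ENNReal.rpow_one]
      _ = ENNReal.ofReal t ^ (1 - l) * ENNReal.ofReal t ^ l :=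
          ENNReal.rpow_add _ _ (by simp [ht.1]) (by simp)
      _ ≤ f x ^ (1 - l) * g y ^ l :=
          mul_le_mul' (ENNReal.rpow_le_rpow hx.le h1l.le) (ENNReal.rpow_le_rpow hy.le hl0.le)
      _ ≤ h ((1 - l) * x + l * y) := hyp x y
  calc ENNReal.ofReal (1 - l) * volume A + ENNReal.ofReal l * volume B
      = volume ((1 - l) • A) + volume (l • B) := by
        rw [vol_real_smul, vol_real_smul, abs_of_pos h1l, abs_of_pos hl0]
    _ ≤ volume ((1 - l) • A + l • B) :=
        bm_one_dim _ _ (hAm.const_smul₀ _) (hBm.const_smul₀ _)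
          (hAne.smul_set) (hBne.smul_set)
    _ ≤ volume {a | ENNReal.ofReal t ≤ h a} := measure_mono hsub

lemma ennreal_rpow_iSup {c : ℝ} (hc : 0 < c) (u : ℕ → ℝ≥0∞) :
    (⨆ n, u n) ^ c = ⨆ n, u n ^ c := by
  have := OrderIso.map_iSup (ENNReal.orderIsoRpow c hc) u
  simpa only [ENNReal.orderIsoRpow_apply] using this

/-- A space satisfies the Prékopa-Leindler inequality. -/
def IsPLSpace (α : Type*) [MeasurableSpace α] [AddCommGroup α] [Module ℝ α]
    (μ : Measure α) : Prop :=
  ∀ l : ℝ, 0 < l → l < 1 → ∀ f g h : α → ℝ≥0∞, Measurable f → Measurable g → Measurable h →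
    (∀ x y, f x ^ (1 - l) * g y ^ l ≤ h ((1 - l) • x + l • y)) →
    (∫⁻ x, f x ∂μ) ^ (1 - l) * (∫⁻ x, g x ∂μ) ^ l ≤ ∫⁻ x, h x ∂μ

-- bounded case of PL on ℝ
lemma pl_one_bdd {l : ℝ} (hl0 : 0 < l) (hl1 : l < 1) (n : ℕ) (f g h : ℝ → ℝ≥0∞)
    (hf : Measurable f) (hg : Measurable g) (hh : Measurable h)
    (hfn : ∀ x, f x ≤ n) (hgn : ∀ x, g x ≤ n)
    (hyp : ∀ x y, f x ^ (1 - l) * g y ^ l ≤ h ((1 - l) * x + l * y)) :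
    (∫⁻ x, f x) ^ (1 - l) * (∫⁻ x, g x) ^ l ≤ ∫⁻ x, h x := by
  have h1l : (0:ℝ) < 1 - l := by linarith
  set Mf := ⨆ x, f x with hMf
  set Mg := ⨆ x, g x with hMg
  rcases eq_or_ne Mf 0 with hMf0 | hMf0
  · have : ∀ x, f x = 0 := fun x => le_antisymm (le_trans (le_iSup f x) hMf0.le) zero_le
    simp [this, ENNReal.zero_rpow_of_pos h1l]
  rcases eq_or_ne Mg 0 with hMg0 | hMg0
  · have : ∀ x, g x = 0 := fun x => le_antisymm (le_trans (le_iSup g x) hMg0.le) zero_le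
    simp [this, ENNReal.zero_rpow_of_pos hl0]
  have hMft : Mf ≠ ⊤ := (iSup_le hfn).trans_lt (by simp) |>.ne
  have hMgt : Mg ≠ ⊤ := (iSup_le hgn).trans_lt (by simp) |>.ne
  have hMfr0 : Mf ^ (1 - l) ≠ 0 := by
    intro hz
    rw [ENNReal.rpow_eq_zero_iff] at hz
    rcases hz with ⟨h1, _⟩ | ⟨_, h2⟩
    exacts [hMf0 h1, by linarith]
  have hMgr0 : Mg ^ l ≠ 0 := by
    intro hz
    rw [ENNReal.rpow_eq_zero_iff] at hz
    rcases hz with ⟨h1, _⟩ | ⟨_, h2⟩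
    exacts [hMg0 h1, by linarith]
  have hMfrt : Mf ^ (1 - l) ≠ ⊤ := ENNReal.rpow_ne_top_of_nonneg h1l.le hMft
  have hMgrt : Mg ^ l ≠ ⊤ := ENNReal.rpow_ne_top_of_nonneg hl0.le hMgt
  set C := Mf ^ (1 - l) * Mg ^ l with hC
  have hC0 : C ≠ 0 := mul_ne_zero hMfr0 hMgr0
  have hCt : C ≠ ⊤ := ENNReal.mul_ne_top hMfrt hMgrt
  set f' : ℝ → ℝ≥0∞ := fun x => f x / Mf with hf'
  set g' : ℝ → ℝ≥0∞ := fun x => g x / Mg with hg'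
  set h' : ℝ → ℝ≥0∞ := fun x => min (h x / C) 1 with hh'
  have hf'1 : ∀ x, f' x ≤ 1 := fun x => ENNReal.div_le_of_le_mul (by simpa using le_iSup f x)
  have hg'1 : ∀ x, g' x ≤ 1 := fun x => ENNReal.div_le_of_le_mul (by simpa using le_iSup g x)
  have hf's : 1 ≤ ⨆ x, f' x := by
    rw [hf']
    simp only [ENNReal.div_eq_inv_mul]
    rw [← ENNReal.mul_iSup, ← hMf, ENNReal.inv_mul_cancel hMf0 hMft]
  have hg's : 1 ≤ ⨆ x, g' x := by
    rw [hg']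
    simp only [ENNReal.div_eq_inv_mul]
    rw [← ENNReal.mul_iSup, ← hMg, ENNReal.inv_mul_cancel hMg0 hMgt]
  have hyp' : ∀ x y, f' x ^ (1 - l) * g' y ^ l ≤ h' ((1 - l) * x + l * y) := by
    intro x y
    refine le_min ?_ ?_
    · calc f' x ^ (1-l) * g' y ^ l
          = (f x ^ (1-l) * g y ^ l) / C := by
            rw [hf', hg', ENNReal.div_rpow_of_nonneg _ _ h1l.le,
              ENNReal.div_rpow_of_nonneg _ _ hl0.le, hC,
              ENNReal.div_eq_inv_mul, ENNReal.div_eq_inv_mul, ENNReal.div_eq_inv_mul,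
              ENNReal.mul_inv (Or.inl hMfr0) (Or.inl hMfrt)]
            ring
      _ ≤ h ((1-l)*x + l*y) / C := ENNReal.div_le_div_right (hyp x y) C
    · exact mul_le_one' (ENNReal.rpow_le_one (hf'1 x) h1l.le) (ENNReal.rpow_le_one (hg'1 y) hl0.le)
  have core := pl_one_core hl0 hl1 f' g' h'
    (hf.div_const _) (hg.div_const _) ((hh.div_const _).min measurable_const)
    hf'1 hg'1 (fun x => min_le_right _ _) hf's hg's hyp'
  -- rewrite integrals
  have hif : ∫⁻ x, f' x = (∫⁻ x, f x) / Mf := by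
    simp only [hf', div_eq_mul_inv]
    rw [lintegral_mul_const' _ _ (by simp [hMf0])]
  have hig : ∫⁻ x, g' x = (∫⁻ x, g x) / Mg := by
    simp only [hg', div_eq_mul_inv]
    rw [lintegral_mul_const' _ _ (by simp [hMg0])]
  have hih : ∫⁻ x, h' x ≤ (∫⁻ x, h x) / C := by
    refine le_trans (lintegral_mono fun x => min_le_left _ _) ?_
    simp only [div_eq_mul_inv]
    rw [lintegral_mul_const' _ _ (by simp [hC0])]
  rw [hif, hig] at core
  have core2 : C * (ENNReal.ofReal (1-l) * ((∫⁻ x, f x) / Mf)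
      + ENNReal.ofReal l * ((∫⁻ x, g x) / Mg)) ≤ ∫⁻ x, h x := by
    rw [mul_comm]
    exact (ENNReal.le_div_iff_mul_le (Or.inl hC0) (Or.inl hCt)).1 (core.trans hih)
  refine le_trans ?_ core2
  calc (∫⁻ x, f x) ^ (1-l) * (∫⁻ x, g x) ^ l
      = C * (((∫⁻ x, f x) / Mf) ^ (1-l) * ((∫⁻ x, g x) / Mg) ^ l) := by
        rw [ENNReal.div_rpow_of_nonneg _ _ h1l.le, ENNReal.div_rpow_of_nonneg _ _ hl0.le]
        rw [hC]
        rw [ENNReal.div_eq_inv_mul, ENNReal.div_eq_inv_mul]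
        rw [show Mf ^ (1-l) * Mg ^ l * ((Mf ^ (1-l))⁻¹ * (∫⁻ x, f x) ^ (1-l) * ((Mg ^ l)⁻¹ * (∫⁻ x, g x) ^ l))
          = (Mf ^ (1-l) * (Mf ^ (1-l))⁻¹) * (Mg ^ l * (Mg ^ l)⁻¹) * ((∫⁻ x, f x) ^ (1-l) * (∫⁻ x, g x) ^ l) by ring]
        rw [ENNReal.mul_inv_cancel hMfr0 hMfrt, ENNReal.mul_inv_cancel hMgr0 hMgrt,
          one_mul, one_mul]
    _ ≤ C * (ENNReal.ofReal (1-l) * ((∫⁻ x, f x) / Mf) + ENNReal.ofReal l * ((∫⁻ x, g x) / Mg)) := by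
        exact mul_le_mul_right (ennreal_am_gm hl0 hl1 _ _) C

lemma ennreal_iSup_min_nat (a : ℝ≥0∞) : ⨆ n : ℕ, min a n = a := by
  refine le_antisymm (iSup_le fun n => min_le_left _ _) ?_
  rcases eq_or_ne a ⊤ with rfl | ha
  · calc (⊤:ℝ≥0∞) = ⨆ n : ℕ, (n:ℝ≥0∞) := ENNReal.iSup_natCast.symm
      _ ≤ ⨆ n : ℕ, min ⊤ (n:ℝ≥0∞) := by simp
  · obtain ⟨n, hn⟩ := ENNReal.exists_nat_gt ha
    calc a = min a n := (min_eq_left hn.le).symm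
      _ ≤ ⨆ n : ℕ, min a n := le_iSup (fun n : ℕ => min a (n:ℝ≥0∞)) n

lemma pl_one : IsPLSpace ℝ volume := by
  intro l hl0 hl1 f g h hf hg hh hyp
  have h1l : (0:ℝ) < 1 - l := by linarith
  have key : ∀ n : ℕ, (∫⁻ x, min (f x) n) ^ (1 - l) * (∫⁻ x, min (g x) n) ^ l ≤ ∫⁻ x, h x := by
    intro n
    refine pl_one_bdd hl0 hl1 n _ _ h (hf.min measurable_const) (hg.min measurable_const) hh
      (fun x => min_le_right _ _) (fun x => min_le_right _ _) (fun x y => ?_)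
    calc min (f x) n ^ (1-l) * min (g y) n ^ l
        ≤ f x ^ (1-l) * g y ^ l :=
          mul_le_mul' (ENNReal.rpow_le_rpow (min_le_left _ _) h1l.le)
            (ENNReal.rpow_le_rpow (min_le_left _ _) hl0.le)
      _ ≤ h ((1-l) • x + l • y) := hyp x y
  have hfi : ∫⁻ x, f x = ⨆ n : ℕ, ∫⁻ x, min (f x) n := by
    rw [← lintegral_iSup (fun n => hf.min measurable_const)
      (fun i j hij x => min_le_min le_rfl (by exact_mod_cast Nat.cast_le.2 hij))]
    congr 1; ext x; exact (ennreal_iSup_min_nat (f x)).symm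
  have hgi : ∫⁻ x, g x = ⨆ n : ℕ, ∫⁻ x, min (g x) n := by
    rw [← lintegral_iSup (fun n => hg.min measurable_const)
      (fun i j hij x => min_le_min le_rfl (by exact_mod_cast Nat.cast_le.2 hij))]
    congr 1; ext x; exact (ennreal_iSup_min_nat (g x)).symm
  rw [hfi, hgi, ennreal_rpow_iSup h1l, ennreal_rpow_iSup hl0, ENNReal.iSup_mul]
  refine iSup_le fun i => ?_
  rw [ENNReal.mul_iSup]
  refine iSup_le fun j => ?_
  set k := max i j with hk
  have mono1 : ∫⁻ x, min (f x) i ≤ ∫⁻ x, min (f x) k :=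
    lintegral_mono fun x => min_le_min le_rfl (by exact_mod_cast Nat.cast_le.2 (le_max_left i j))
  have mono2 : ∫⁻ x, min (g x) j ≤ ∫⁻ x, min (g x) k :=
    lintegral_mono fun x => min_le_min le_rfl (by exact_mod_cast Nat.cast_le.2 (le_max_right i j))
  calc (∫⁻ x, min (f x) i) ^ (1-l) * (∫⁻ x, min (g x) j) ^ l
      ≤ (∫⁻ x, min (f x) k) ^ (1-l) * (∫⁻ x, min (g x) k) ^ l :=
        mul_le_mul' (ENNReal.rpow_le_rpow mono1 h1l.le) (ENNReal.rpow_le_rpow mono2 hl0.le)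
    _ ≤ ∫⁻ x, h x := key k

lemma pl_zero : IsPLSpace (Fin 0 → ℝ) volume := by
  intro l hl0 hl1 f g h hf hg hh hyp
  have huniv : (volume : Measure (Fin 0 → ℝ)) univ = 1 := by
    rw [MeasureTheory.volume_pi, Measure.pi_univ]
    simp
  rw [lintegral_unique, lintegral_unique, lintegral_unique, huniv, mul_one, mul_one, mul_one]
  refine le_trans (le_of_eq ?_) (le_trans (hyp default default)
    (le_of_eq (congrArg h (Subsingleton.elim _ _))))
  congr 1
  · exact congrArg (fun z => f z ^ (1 - l)) (Subsingleton.elim _ _)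
  · exact congrArg (fun z => g z ^ l) (Subsingleton.elim _ _)

lemma pl_transfer {α β : Type*} [MeasurableSpace α] [AddCommGroup α] [Module ℝ α]
    [MeasurableSpace β] [AddCommGroup β] [Module ℝ β]
    (μ : Measure α) (ν : Measure β) (e : α ≃ᵐ β) (he : MeasurePreserving e μ ν)
    (hlin : ∀ (c c' : ℝ) (x y : β), e.symm (c • x + c' • y) = c • e.symm x + c' • e.symm y)
    (hPL : IsPLSpace β ν) : IsPLSpace α μ := by
  intro l hl0 hl1 f g h hf hg hh hyp
  have hsymm : MeasurePreserving e.symm ν μ := he.symm e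
  have hif : ∫⁻ y, f (e.symm y) ∂ν = ∫⁻ x, f x ∂μ := hsymm.lintegral_comp hf
  have hig : ∫⁻ y, g (e.symm y) ∂ν = ∫⁻ x, g x ∂μ := hsymm.lintegral_comp hg
  have hih : ∫⁻ y, h (e.symm y) ∂ν = ∫⁻ x, h x ∂μ := hsymm.lintegral_comp hh
  rw [← hif, ← hig, ← hih]
  refine hPL l hl0 hl1 _ _ _ (hf.comp e.symm.measurable) (hg.comp e.symm.measurable)
    (hh.comp e.symm.measurable) fun x y => ?_
  have := hyp (e.symm x) (e.symm y)
  rwa [← hlin] at this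

lemma pl_prod {β : Type*} [MeasurableSpace β] [AddCommGroup β] [Module ℝ β]
    (ν : Measure β) [SigmaFinite ν] (hPL : IsPLSpace β ν) :
    IsPLSpace (ℝ × β) ((volume : Measure ℝ).prod ν) := by
  intro l hl0 hl1 f g h hf hg hh hyp
  set F : ℝ → ℝ≥0∞ := fun x₁ => ∫⁻ x₂, f (x₁, x₂) ∂ν with hF
  set G : ℝ → ℝ≥0∞ := fun y₁ => ∫⁻ y₂, g (y₁, y₂) ∂ν with hG
  set H : ℝ → ℝ≥0∞ := fun z₁ => ∫⁻ z₂, h (z₁, z₂) ∂ν with hH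
  have hFm : Measurable F := hf.lintegral_prod_right'
  have hGm : Measurable G := hg.lintegral_prod_right'
  have hHm : Measurable H := hh.lintegral_prod_right'
  have key : ∀ x₁ y₁ : ℝ, F x₁ ^ (1 - l) * G y₁ ^ l ≤ H ((1 - l) • x₁ + l • y₁) := by
    intro x₁ y₁
    refine hPL l hl0 hl1 (fun x₂ => f (x₁, x₂)) (fun y₂ => g (y₁, y₂))
      (fun z₂ => h ((1 - l) • x₁ + l • y₁, z₂))
      (hf.comp measurable_prodMk_left) (hg.comp measurable_prodMk_left)
      (hh.comp measurable_prodMk_left) fun x₂ y₂ => ?_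
    have := hyp (x₁, x₂) (y₁, y₂)
    simpa [Prod.smul_mk, Prod.mk_add_mk] using this
  have := pl_one l hl0 hl1 F G H hFm hGm hHm key
  rwa [lintegral_prod _ hf.aemeasurable, lintegral_prod _ hg.aemeasurable,
    lintegral_prod _ hh.aemeasurable]

lemma pl_pi : ∀ n : ℕ, IsPLSpace (Fin n → ℝ) volume := by
  intro n
  induction n with
  | zero => exact pl_zero
  | succ n ih =>
    have hprod := pl_prod (volume : Measure (Fin n → ℝ)) ih
    refine pl_transfer _ _ (MeasurableEquiv.piFinSuccAbove (fun _ => ℝ) 0)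
      (volume_preserving_piFinSuccAbove (fun _ => ℝ) 0) ?_ ?_
    · intro c c' x y
      ext j
      simp [MeasurableEquiv.piFinSuccAbove, Fin.insertNthEquiv]
      refine Fin.cases ?_ (fun i => ?_) j <;> simp
    · exact hprod

lemma pl_euclidean (m : ℕ) : IsPLSpace (EuclideanSpace ℝ (Fin m)) volume := by
  refine pl_transfer _ _ (MeasurableEquiv.toLp 2 (Fin m → ℝ)).symm
    (EuclideanSpace.volume_preserving_symm_measurableEquiv_toLp (Fin m)) ?_ (pl_pi m)
  intro c c' x y
  ext j
  simp [MeasurableEquiv.coe_toLp]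

lemma vol_closure_convex {m : ℕ} {A : Set (EuclideanSpace ℝ (Fin m))} (hA : Convex ℝ A) :
    volume (closure A) = volume A := by
  refine le_antisymm ?_ (measure_mono subset_closure)
  calc volume (closure A) ≤ volume (A ∪ frontier A) := by
        refine measure_mono ?_
        rw [closure_eq_interior_union_frontier]
        exact union_subset_union_left _ interior_subset
    _ ≤ volume A + volume (frontier A) := measure_union_le _ _
    _ = volume A := by rw [hA.addHaar_frontier volume, add_zero]

lemma closure_add_closure_subset {m : ℕ} (S T : Set (EuclideanSpace ℝ (Fin m))) :
    closure S + closure T ⊆ closure (S + T) := by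
  rintro z ⟨x, hx, y, hy, rfl⟩
  obtain ⟨a, ha, hax⟩ := mem_closure_iff_seq_limit.1 hx
  obtain ⟨b, hb, hby⟩ := mem_closure_iff_seq_limit.1 hy
  exact mem_closure_of_tendsto (hax.add hby)
    (Eventually.of_forall fun n => Set.add_mem_add (ha n) (hb n))

lemma bm_half {m : ℕ} (A B : Set (EuclideanSpace ℝ (Fin m)))
    (hA : Convex ℝ A) (hB : Convex ℝ B) :
    volume A ^ (2⁻¹ : ℝ) * volume B ^ (2⁻¹ : ℝ)
      ≤ volume (closure ((2:ℝ)⁻¹ • A + (2:ℝ)⁻¹ • B)) := by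
  set S := (2:ℝ)⁻¹ • A + (2:ℝ)⁻¹ • B with hS
  have hyp : ∀ x y, (closure A).indicator (fun _ => (1:ℝ≥0∞)) x ^ (1 - 2⁻¹ : ℝ)
      * (closure B).indicator (fun _ => (1:ℝ≥0∞)) y ^ (2⁻¹ : ℝ)
      ≤ (closure S).indicator (fun _ => (1:ℝ≥0∞)) ((1 - 2⁻¹ : ℝ) • x + (2⁻¹:ℝ) • y) := by
    intro x y
    by_cases hx : x ∈ closure A
    · by_cases hy : y ∈ closure B
      · have hmem : ((1 - 2⁻¹ : ℝ) • x + (2⁻¹:ℝ) • y) ∈ closure S := by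
          have h1 : (1 - 2⁻¹ : ℝ) • x ∈ (2:ℝ)⁻¹ • closure A := by
            rw [show (1 - 2⁻¹ : ℝ) = 2⁻¹ by norm_num]
            exact Set.smul_mem_smul_set hx
          have h2 : (2⁻¹:ℝ) • y ∈ (2:ℝ)⁻¹ • closure B := Set.smul_mem_smul_set hy
          have hc1 : (2:ℝ)⁻¹ • closure A ⊆ closure ((2:ℝ)⁻¹ • A) := by
            have := image_closure_subset_closure_image (f := fun z => (2:ℝ)⁻¹ • z)
              (continuous_const_smul ((2:ℝ)⁻¹)) (s := A)
            simpa [Set.image_smul] using this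
          have hc2 : (2:ℝ)⁻¹ • closure B ⊆ closure ((2:ℝ)⁻¹ • B) := by
            have := image_closure_subset_closure_image (f := fun z => (2:ℝ)⁻¹ • z)
              (continuous_const_smul ((2:ℝ)⁻¹)) (s := B)
            simpa [Set.image_smul] using this
          exact closure_add_closure_subset _ _ (Set.add_mem_add (hc1 h1) (hc2 h2))
        simp [Set.indicator_of_mem, hx, hy, hmem]
      · simp [Set.indicator_of_mem hx, Set.indicator_of_notMem hy,
          ENNReal.zero_rpow_of_pos (by norm_num : (0:ℝ) < 2⁻¹)]
    · simp [Set.indicator_of_notMem hx,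
        ENNReal.zero_rpow_of_pos (by norm_num : (0:ℝ) < 1 - 2⁻¹)]
  have key := pl_euclidean m 2⁻¹ (by norm_num) (by norm_num)
    ((closure A).indicator fun _ => 1) ((closure B).indicator fun _ => 1)
    ((closure S).indicator fun _ => 1)
    (measurable_const.indicator isClosed_closure.measurableSet)
    (measurable_const.indicator isClosed_closure.measurableSet)
    (measurable_const.indicator isClosed_closure.measurableSet) hyp
  rw [lintegral_indicator_const isClosed_closure.measurableSet,
    lintegral_indicator_const isClosed_closure.measurableSet,
    lintegral_indicator_const isClosed_closure.measurableSet] at key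
  simp only [one_mul] at key
  calc volume A ^ (2⁻¹:ℝ) * volume B ^ (2⁻¹:ℝ)
      = volume (closure A) ^ (1 - 2⁻¹:ℝ) * volume (closure B) ^ (2⁻¹:ℝ) := by
        rw [vol_closure_convex hA, vol_closure_convex hB]
        norm_num
    _ ≤ volume (closure S) := key

lemma anderson {m : ℕ} (K : Set (EuclideanSpace ℝ (Fin m))) (hK : Convex ℝ K)
    (hKs : ∀ x ∈ K, -x ∈ K) (r : ℝ) (y : EuclideanSpace ℝ (Fin m)) :
    volume (K ∩ ball y r) ≤ volume (K ∩ ball 0 r) := by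
  set A := K ∩ ball y r with hA
  rcases eq_or_ne (volume A) 0 with h0 | h0
  · rw [h0]; exact zero_le
  have hAc : Convex ℝ A := hK.inter (convex_ball y r)
  have hAt : volume A ≠ ⊤ :=
    ((measure_mono inter_subset_right).trans_lt measure_ball_lt_top).ne
  have hsub : (2:ℝ)⁻¹ • A + (2:ℝ)⁻¹ • (-A) ⊆ K ∩ ball 0 r := by
    rintro z ⟨a, ⟨x, hx, rfl⟩, b, ⟨w, hw, rfl⟩, rfl⟩
    rw [Set.mem_neg] at hw
    constructor
    · have := hK hx.1 (hKs _ hw.1) (by norm_num : (0:ℝ) ≤ 2⁻¹)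
        (by norm_num : (0:ℝ) ≤ 2⁻¹) (by norm_num)
      simpa using this
    · rw [mem_ball_zero_iff]
      have hx' : ‖x - y‖ < r := by rw [← dist_eq_norm]; exact hx.2
      have hw' : ‖(-w) - y‖ < r := by rw [← dist_eq_norm]; exact hw.2
      calc ‖(2:ℝ)⁻¹ • x + (2:ℝ)⁻¹ • w‖ = ‖(2:ℝ)⁻¹ • ((x - y) - ((-w) - y))‖ := by
            congr 1; module
        _ = 2⁻¹ * ‖(x - y) - ((-w) - y)‖ := by
            rw [norm_smul]; norm_num
        _ ≤ 2⁻¹ * (‖x - y‖ + ‖(-w) - y‖) := by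
            have := norm_sub_le (x - y) ((-w) - y)
            nlinarith [norm_nonneg ((x-y) - ((-w)-y))]
        _ < 2⁻¹ * (r + r) := by
            have : ‖x - y‖ + ‖(-w) - y‖ < r + r := add_lt_add hx' hw'
            nlinarith
        _ = r := by ring
  calc volume A = volume A ^ (2⁻¹:ℝ) * volume A ^ (2⁻¹:ℝ) := by
        rw [← ENNReal.rpow_add _ _ h0 hAt]
        norm_num
    _ = volume A ^ (2⁻¹:ℝ) * volume (-A) ^ (2⁻¹:ℝ) := by rw [Measure.measure_neg volume A]
    _ ≤ volume (closure ((2:ℝ)⁻¹ • A + (2:ℝ)⁻¹ • (-A))) := bm_half A (-A) hAc hAc.neg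
    _ ≤ volume (closure (K ∩ ball 0 r)) := measure_mono (closure_mono hsub)
    _ = volume (K ∩ ball 0 r) := vol_closure_convex (hK.inter (convex_ball 0 r))

lemma anderson' {m : ℕ} (K : Set (EuclideanSpace ℝ (Fin m))) (hK : Convex ℝ K)
    (u : EuclideanSpace ℝ (Fin m)) (hKs : ∀ x ∈ K, (2:ℝ) • u - x ∈ K) (r : ℝ)
    (v : EuclideanSpace ℝ (Fin m)) :
    volume (K ∩ ball v r) ≤ volume (K ∩ ball u r) := by
  set K' := (-u) +ᵥ K with hK'
  have hK'c : Convex ℝ K' := hK.vadd _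
  have hK's : ∀ x ∈ K', -x ∈ K' := by
    rintro x ⟨k, hk, rfl⟩
    exact ⟨(2:ℝ) • u - k, hKs k hk, by simp only [vadd_eq_add]; module⟩
  have base := anderson K' hK'c hK's r (v - u)
  have e1 : K' ∩ ball (v - u) r = (-u) +ᵥ (K ∩ ball v r) := by
    rw [Set.vadd_set_inter, Metric.vadd_ball]
    congr 2
    simp [neg_add_eq_sub]
  have e2 : K' ∩ ball 0 r = (-u) +ᵥ (K ∩ ball u r) := by
    rw [Set.vadd_set_inter, Metric.vadd_ball]
    congr 2
    simp
  rw [e1, e2, measure_vadd, measure_vadd] at base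
  exact base

lemma mass_eq {m : ℕ} (ρ : EuclideanSpace ℝ (Fin m) → ℝ) (hρ : ∀ x, 0 ≤ ρ x)
    (u : EuclideanSpace ℝ (Fin m)) (R : ℝ)
    (hconv : ∀ t : ℝ, Convex ℝ {x : EuclideanSpace ℝ (Fin m) | x ∈ ball u R ∧ t ≤ ρ x})
    (v : EuclideanSpace ℝ (Fin m)) (r : ℝ) (hsub : ball v r ⊆ ball u R) :
    volume.withDensity (fun x => ENNReal.ofReal (ρ x)) (ball v r)
      = ∫⁻ t in Ioi (0:ℝ), volume ({x | x ∈ ball u R ∧ t ≤ ρ x} ∩ ball v r) := by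
  have hseteq : ∀ t : ℝ, {x | t ≤ ρ x} ∩ ball v r
      = {x | x ∈ ball u R ∧ t ≤ ρ x} ∩ ball v r := by
    intro t
    ext x
    simp only [mem_inter_iff, mem_setOf_eq]
    exact ⟨fun ⟨h1, h2⟩ => ⟨⟨hsub h2, h1⟩, h2⟩, fun ⟨⟨_, h1⟩, h2⟩ => ⟨h1, h2⟩⟩
  have hnms : ∀ t : ℝ, NullMeasurableSet {x | t ≤ ρ x} (volume.restrict (ball v r)) := by
    intro t
    have h1 : NullMeasurableSet ({x | x ∈ ball u R ∧ t ≤ ρ x} ∩ ball v r) volume :=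
      ((hconv t).inter (convex_ball v r)).nullMeasurableSet _
    have h2 : NullMeasurableSet ({x | x ∈ ball u R ∧ t ≤ ρ x} ∩ ball v r)
        (volume.restrict (ball v r)) :=
      h1.mono_ac Measure.restrict_le_self.absolutelyContinuous
    refine h2.congr ?_
    filter_upwards [ae_restrict_mem measurableSet_ball] with x hx
    simp only [eq_iff_iff, mem_inter_iff, mem_setOf_eq]
    exact ⟨fun ⟨⟨_, h⟩, _⟩ => h, fun h => ⟨⟨hsub hx, h⟩, hx⟩⟩
  have hnm : NullMeasurable ρ (volume.restrict (ball v r)) := by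
    have : @Measurable (NullMeasurableSpace (EuclideanSpace ℝ (Fin m))
        (volume.restrict (ball v r))) ℝ _ _ ρ := by
      refine measurable_of_Ici fun t => ?_
      exact hnms t
    exact fun s hs => this hs
  have hae : AEMeasurable ρ (volume.restrict (ball v r)) := hnm.aemeasurable
  rw [withDensity_apply _ measurableSet_ball,
    lintegral_eq_lintegral_meas_le _ (Eventually.of_forall hρ) hae]
  refine setLIntegral_congr_fun measurableSet_Ioi (fun t _ => ?_)
  rw [Measure.restrict_apply₀ (hnms t), hseteq t]


/-- Ball-mass ratio with the conventions `c/0 = ∞` for `c > 0` and `0/0 = 1`. -/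
noncomputable def mRatio (a b : ENNReal) : ENNReal :=
  if b = 0 then (if a = 0 then 1 else ⊤) else a / b

theorem stmt17 {m : ℕ} (ρ : EuclideanSpace ℝ (Fin m) → ℝ) (hρ : ∀ x, 0 ≤ ρ x)
    (μ : Measure (EuclideanSpace ℝ (Fin m))) [IsProbabilityMeasure μ]
    (hμ : μ = volume.withDensity (fun x => ENNReal.ofReal (ρ x)))
    (u : EuclideanSpace ℝ (Fin m)) (R : ℝ) (hR : 0 < R)
    (hsym : ∀ x : EuclideanSpace ℝ (Fin m), ‖x‖ < R → ρ (u + x) = ρ (u - x))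
    (hconv : ∀ t : ℝ, Convex ℝ {x : EuclideanSpace ℝ (Fin m) | x ∈ ball u R ∧ t ≤ ρ x})
    (r : ℕ → ℝ) (hrpos : ∀ n, 0 < r n) (hr : Tendsto r atTop (𝓝 0))
    (us : ℕ → EuclideanSpace ℝ (Fin m)) (hus : Tendsto us atTop (𝓝 u)) :
    1 ≤ Filter.liminf
      (fun n => mRatio (μ (ball u (r n))) (μ (ball (us n) (r n)))) atTop := by
  have hsymK : ∀ t : ℝ, ∀ x ∈ {x : EuclideanSpace ℝ (Fin m) | x ∈ ball u R ∧ t ≤ ρ x},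
      (2:ℝ) • u - x ∈ {x : EuclideanSpace ℝ (Fin m) | x ∈ ball u R ∧ t ≤ ρ x} := by
    intro t x hx
    obtain ⟨hxb, hxt⟩ := hx
    have hw : ‖x - u‖ < R := by rw [← dist_eq_norm]; exact mem_ball.1 hxb
    have h1 : ρ (u + (x - u)) = ρ (u - (x - u)) := hsym (x - u) hw
    have h2 : u + (x - u) = x := by abel
    have h3 : (2:ℝ) • u - x = u - (x - u) := by module
    constructor
    · show ((2:ℝ) • u - x) ∈ ball u R
      rw [mem_ball, h3, dist_eq_norm]
      simpa [norm_sub_rev] using hw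
    · show t ≤ ρ ((2:ℝ) • u - x)
      rw [h3, ← h1, h2]
      exact hxt
  have hkey : ∀ᶠ n in atTop, μ (ball (us n) (r n)) ≤ μ (ball u (r n)) := by
    have h1 : ∀ᶠ n in atTop, r n < R / 2 := hr.eventually (gt_mem_nhds (by linarith))
    have h2 : ∀ᶠ n in atTop, dist (us n) u < R / 2 :=
      hus.eventually (Metric.ball_mem_nhds u (by linarith))
    filter_upwards [h1, h2] with n hn1 hn2
    have hsub1 : ball u (r n) ⊆ ball u R := ball_subset_ball (by linarith)
    have hsub2 : ball (us n) (r n) ⊆ ball u R := ball_subset_ball' (by linarith [dist_comm (us n) u])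
    rw [hμ, mass_eq ρ hρ u R hconv (us n) (r n) hsub2, mass_eq ρ hρ u R hconv u (r n) hsub1]
    exact lintegral_mono fun t => anderson' _ (hconv t) u (hsymK t) (r n) (us n)
  refine le_liminf_of_le (by isBoundedDefault) ?_
  filter_upwards [hkey] with n hn
  by_cases hb : μ (ball (us n) (r n)) = 0
  · by_cases ha : μ (ball u (r n)) = 0
    · simp [mRatio, hb, ha]
    · simp [mRatio, hb, ha]
  · have hbt : μ (ball (us n) (r n)) ≠ ⊤ := measure_ne_top μ _
    rw [mRatio, if_neg hb]
    rw [ENNReal.le_div_iff_mul_le (Or.inl hb) (Or.inl hbt), one_mul]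
    exact hn
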